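/- For a single user (K = 1) with downlink power fixed at P_A, harvested energy E(τ^D) = η·h·P_A·τ^D, and uplink rate R(τ^D) = (1 − τ^D)·log(1 + (h·η·h·P_A·τ^D)/(N_0·(1 − τ^D))), the function R is concave on (0, 1). -/

import Mathlib

open Real Set

theorem stmt13 (η h PA N0 : ℝ) (hη : 0 < η) (hh : 0 < h)
    (hPA : 0 < PA) (hN0 : 0 < N0) :
    ConcaveOn ℝ (Set.Ioo (0 : ℝ) 1)
      (fun τD : ℝ =>
        (1 - τD) * Real.log (1 + (h * η * h * PA * τD) / (N0 * (1 - τD)))) := by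
  set c := h * η * h * PA with hc
  have hcpos : 0 < c := by positivity
  refine ⟨convex_Ioo 0 1, ?_⟩
  intro x hx y hy a b ha hb hab
  simp only [smul_eq_mul]
  rcases eq_or_lt_of_le ha with h0 | hapos
  · have hb1 : b = 1 := by linarith
    simp [← h0, hb1]
  rcases eq_or_lt_of_le hb with h0 | hbpos
  · have ha1 : a = 1 := by linarith
    simp [← h0, ha1]
  obtain ⟨hx0, hx1⟩ := hx
  obtain ⟨hy0, hy1⟩ := hy
  have h1x : 0 < 1 - x := by linarith
  have h1y : 0 < 1 - y := by linarith
  set z := a * x + b * y with hz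
  have hs : 0 < 1 - z := by nlinarith
  set s := 1 - z with hsdef
  have hseq : s = a * (1 - x) + b * (1 - y) := by
    simp only [hsdef, hz]; nlinarith
  set p := 1 + c * x / (N0 * (1 - x)) with hp
  set q := 1 + c * y / (N0 * (1 - y)) with hq
  have hppos : 0 < p := by rw [hp]; positivity
  have hqpos : 0 < q := by rw [hq]; positivity
  set w1 := a * (1 - x) / s with hw1def
  set w2 := b * (1 - y) / s with hw2def
  have hw1 : 0 < w1 := by positivity
  have hw2 : 0 < w2 := by positivity
  have hw12 : w1 + w2 = 1 := by
    rw [hw1def, hw2def]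
    field_simp [hw1def, hw2def]
    linarith [hseq]
  have key := (strictConcaveOn_log_Ioi.concaveOn).2 (mem_Ioi.mpr hppos)
    (mem_Ioi.mpr hqpos) hw1.le hw2.le hw12
  simp only [smul_eq_mul] at key
  have hs' : a * (1 - x) + b * (1 - y) ≠ 0 := by rw [← hseq]; exact hs.ne'
  have hcomb : w1 * p + w2 * q = 1 + c * z / (N0 * s) := by
    simp only [hw1def, hw2def, hp, hq, hz, hseq]
    field_simp
    ring
  rw [hcomb] at key
  have hmul := mul_le_mul_of_nonneg_left key hs.le
  have e1 : s * (w1 * Real.log p + w2 * Real.log q)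
      = a * ((1 - x) * Real.log p) + b * ((1 - y) * Real.log q) := by
    rw [hw1def, hw2def]
    field_simp [hw1def, hw2def]
  rw [e1] at hmul
  exact hmul
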